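/- Let F : ℝ × ℝ^{n×n} → ℝ^{n×n} be continuous, Lipschitz-continuous in its matrix argument uniformly in t, and satisfy F(t, Y)ᵀ = F(t, Yᵀ) for all Y ∈ ℝ^{n×n} and all t. Let U0 ∈ ℝ^{n×r} have orthonormal columns and let S0 ∈ ℝ^{r×r} be symmetric (S0ᵀ = S0). Let K : ℝ → ℝ^{n×r} solve K'(t) = F(t, K(t) U0ᵀ) U0 with K(t0) = U0 S0, and let L : ℝ → ℝ^{n×r} solve L'(t) = F(t, U0 L(t)ᵀ)ᵀ U0 with L(t0) = U0 S0ᵀ, both on [t0, t1]. Then K(t) = L(t) for all t ∈ [t0, t1]. -/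

import Mathlib

open Matrix

/-- The Frobenius norm `‖A‖_F = trace(Aᵀ A)^{1/2}`. -/
noncomputable def frobNorm {m n : ℕ} (A : Matrix (Fin m) (Fin n) ℝ) : ℝ :=
  Real.sqrt (Aᵀ * A).trace

attribute [local instance] Matrix.normedAddCommGroup Matrix.normedSpace

lemma frobNorm_eq {m n : ℕ} (A : Matrix (Fin m) (Fin n) ℝ) :
    frobNorm A = Real.sqrt (∑ i, ∑ j, (A i j) ^ 2) := by
  unfold frobNorm
  congr 1
  simp only [Matrix.trace, Matrix.diag, Matrix.mul_apply, Matrix.transpose_apply, ← sq]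
  exact Finset.sum_comm

lemma frobNorm_nonneg {m n : ℕ} (A : Matrix (Fin m) (Fin n) ℝ) : 0 ≤ frobNorm A :=
  Real.sqrt_nonneg _

lemma frobNorm_transpose {m n : ℕ} (A : Matrix (Fin m) (Fin n) ℝ) :
    frobNorm Aᵀ = frobNorm A := by
  unfold frobNorm
  rw [Matrix.transpose_transpose, Matrix.trace_mul_comm]

lemma frobNorm_mul_le {m n p : ℕ} (A : Matrix (Fin m) (Fin n) ℝ)
    (B : Matrix (Fin n) (Fin p) ℝ) : frobNorm (A * B) ≤ frobNorm A * frobNorm B := by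
  rw [frobNorm_eq, frobNorm_eq, frobNorm_eq, ← Real.sqrt_mul (by positivity)]
  apply Real.sqrt_le_sqrt
  simp only [Matrix.mul_apply]
  calc ∑ i, ∑ j, (∑ k, A i k * B k j) ^ 2
      ≤ ∑ i, ∑ j, (∑ k, (A i k) ^ 2) * (∑ k, (B k j) ^ 2) := by
        apply Finset.sum_le_sum; intro i _
        apply Finset.sum_le_sum; intro j _
        exact Finset.sum_mul_sq_le_sq_mul_sq Finset.univ (fun k => A i k) (fun k => B k j)
    _ = (∑ i, ∑ k, (A i k) ^ 2) * (∑ k, ∑ j, (B k j) ^ 2) := by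
        simp_rw [← Finset.mul_sum, ← Finset.sum_mul]
        congr 1
        exact Finset.sum_comm

lemma norm_le_frobNorm {m n : ℕ} (A : Matrix (Fin m) (Fin n) ℝ) : ‖A‖ ≤ frobNorm A := by
  rw [Matrix.norm_le_iff (frobNorm_nonneg A)]
  intro i j
  rw [frobNorm_eq, Real.norm_eq_abs, ← Real.sqrt_sq_eq_abs]
  apply Real.sqrt_le_sqrt
  calc (A i j) ^ 2 ≤ ∑ j', (A i j') ^ 2 :=
        Finset.single_le_sum (f := fun j' => (A i j') ^ 2)
          (fun k _ => sq_nonneg _) (Finset.mem_univ j)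
    _ ≤ ∑ i', ∑ j', (A i' j') ^ 2 :=
        Finset.single_le_sum (f := fun i' => ∑ j', (A i' j') ^ 2)
          (fun k _ => Finset.sum_nonneg fun _ _ => sq_nonneg _) (Finset.mem_univ i)

lemma frobNorm_le_norm {m n : ℕ} (A : Matrix (Fin m) (Fin n) ℝ) :
    frobNorm A ≤ Real.sqrt (m * n) * ‖A‖ := by
  rw [frobNorm_eq, ← Real.sqrt_sq (norm_nonneg A), ← Real.sqrt_mul (by positivity)]
  apply Real.sqrt_le_sqrt
  calc ∑ i, ∑ j, (A i j) ^ 2 ≤ ∑ _i : Fin m, ∑ _j : Fin n, ‖A‖ ^ 2 := by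
        apply Finset.sum_le_sum; intro i _
        apply Finset.sum_le_sum; intro j _
        calc (A i j)^2 = ‖A i j‖^2 := by rw [Real.norm_eq_abs, sq_abs]
          _ ≤ ‖A‖^2 := by
            have := Matrix.norm_entry_le_entrywise_sup_norm A (i := i) (j := j)
            exact pow_le_pow_left₀ (norm_nonneg _) this 2
    _ = (m * n : ℝ) * ‖A‖ ^ 2 := by simp [Finset.sum_const]; ring

/-- Key step of the symmetry-preservation proof (Theorem 3): under the symmetry condition
`F(t,Y)ᵀ = F(t,Yᵀ)`, with symmetric `S₀` and orthonormal `U₀`, the K-step and L-step of the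
rank-adaptive integrator produce identical results. -/
theorem kStep_eq_lStep_symmetric
    {n r : ℕ} {t0 t1 : ℝ}
    (F : ℝ → Matrix (Fin n) (Fin n) ℝ → Matrix (Fin n) (Fin n) ℝ)
    (hFcont : Continuous fun p : ℝ × Matrix (Fin n) (Fin n) ℝ => F p.1 p.2)
    (hFlip : ∃ C : ℝ, ∀ t Y Z, frobNorm (F t Y - F t Z) ≤ C * frobNorm (Y - Z))
    (hFsym : ∀ t Y, (F t Y)ᵀ = F t Yᵀ)
    (U0 : Matrix (Fin n) (Fin r) ℝ) (S0 : Matrix (Fin r) (Fin r) ℝ)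
    (hU0 : U0ᵀ * U0 = 1) (hS0 : S0ᵀ = S0)
    (K L : ℝ → Matrix (Fin n) (Fin r) ℝ)
    (hK0 : K t0 = U0 * S0)
    (hK : ∀ t ∈ Set.Icc t0 t1, ∀ i j,
      HasDerivAt (fun s => K s i j) ((F t (K t * U0ᵀ) * U0) i j) t)
    (hL0 : L t0 = U0 * S0ᵀ)
    (hL : ∀ t ∈ Set.Icc t0 t1, ∀ i j,
      HasDerivAt (fun s => L s i j) (((F t (U0 * (L t)ᵀ))ᵀ * U0) i j) t) :
    ∀ t ∈ Set.Icc t0 t1, K t = L t := by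
  obtain ⟨C, hC⟩ := hFlip
  set c : ℝ := max C 0 with hc
  have hc0 : (0:ℝ) ≤ c := le_max_right _ _
  have hC' : ∀ t Y Z, frobNorm (F t Y - F t Z) ≤ c * frobNorm (Y - Z) := fun t Y Z =>
    (hC t Y Z).trans (mul_le_mul_of_nonneg_right (le_max_left _ _) (frobNorm_nonneg _))
  set v : ℝ → Matrix (Fin n) (Fin r) ℝ → Matrix (Fin n) (Fin r) ℝ :=
    fun t X => F t (X * U0ᵀ) * U0 with hv
  set Kc : ℝ := c * Real.sqrt ((n : ℝ) * (r : ℝ)) * (frobNorm U0 * frobNorm U0) with hKc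
  have hKc0 : (0:ℝ) ≤ Kc := by
    have := frobNorm_nonneg U0
    have := Real.sqrt_nonneg ((n : ℝ) * (r : ℝ))
    positivity
  -- Lipschitz continuity of the vector field
  have hlip : ∀ t, LipschitzWith Kc.toNNReal (v t) := by
    intro t
    apply LipschitzWith.of_dist_le_mul
    intro X Y
    rw [dist_eq_norm, dist_eq_norm, Real.coe_toNNReal _ hKc0]
    have h1 : v t X - v t Y = (F t (X * U0ᵀ) - F t (Y * U0ᵀ)) * U0 := by
      simp only [hv, Matrix.sub_mul]
    rw [h1]
    calc ‖(F t (X * U0ᵀ) - F t (Y * U0ᵀ)) * U0‖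
        ≤ frobNorm ((F t (X * U0ᵀ) - F t (Y * U0ᵀ)) * U0) := norm_le_frobNorm _
      _ ≤ frobNorm (F t (X * U0ᵀ) - F t (Y * U0ᵀ)) * frobNorm U0 := frobNorm_mul_le _ _
      _ ≤ (c * frobNorm (X * U0ᵀ - Y * U0ᵀ)) * frobNorm U0 :=
          mul_le_mul_of_nonneg_right (hC' _ _ _) (frobNorm_nonneg _)
      _ = (c * frobNorm ((X - Y) * U0ᵀ)) * frobNorm U0 := by rw [Matrix.sub_mul]
      _ ≤ (c * (frobNorm (X - Y) * frobNorm U0ᵀ)) * frobNorm U0 := by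
          apply mul_le_mul_of_nonneg_right _ (frobNorm_nonneg _)
          exact mul_le_mul_of_nonneg_left (frobNorm_mul_le _ _) hc0
      _ ≤ (c * ((Real.sqrt ((n : ℝ) * (r : ℝ)) * ‖X - Y‖) * frobNorm U0ᵀ)) * frobNorm U0 := by
          apply mul_le_mul_of_nonneg_right _ (frobNorm_nonneg _)
          apply mul_le_mul_of_nonneg_left _ hc0
          exact mul_le_mul_of_nonneg_right (frobNorm_le_norm _) (frobNorm_nonneg _)
      _ = Kc * ‖X - Y‖ := by rw [frobNorm_transpose, hKc]; ring
  -- entrywise derivatives give matrix derivatives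
  have deriv_of : ∀ (J : ℝ → Matrix (Fin n) (Fin r) ℝ) (t : ℝ)
      (W : Matrix (Fin n) (Fin r) ℝ),
      (∀ i j, HasDerivAt (fun s => J s i j) (W i j) t) → HasDerivAt J W t := by
    intro J t W h
    exact hasDerivAt_pi.2 fun i => hasDerivAt_pi.2 fun j => h i j
  have hKd : ∀ t ∈ Set.Icc t0 t1, HasDerivAt K (v t (K t)) t := fun t ht =>
    deriv_of K t _ (hK t ht)
  have hLd : ∀ t ∈ Set.Icc t0 t1, HasDerivAt L (v t (L t)) t := by
    intro t ht
    have h2 : (F t (U0 * (L t)ᵀ))ᵀ * U0 = v t (L t) := by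
      rw [hFsym, Matrix.transpose_mul, Matrix.transpose_transpose]
    exact deriv_of L t _ (h2 ▸ hL t ht)
  have hKcont : ContinuousOn K (Set.Icc t0 t1) := fun t ht =>
    ((hKd t ht).continuousAt).continuousWithinAt
  have hLcont : ContinuousOn L (Set.Icc t0 t1) := fun t ht =>
    ((hLd t ht).continuousAt).continuousWithinAt
  have hinit : K t0 = L t0 := by rw [hK0, hL0, hS0]
  have := ODE_solution_unique_of_mem_Icc_right
    (v := v) (s := fun _ => (Set.univ : Set (Matrix (Fin n) (Fin r) ℝ)))
    (fun t _ => (hlip t).lipschitzOnWith)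
    hKcont
    (fun t ht => (hKd t (Set.Ico_subset_Icc_self ht)).hasDerivWithinAt)
    (fun _ _ => trivial)
    hLcont
    (fun t ht => (hLd t (Set.Ico_subset_Icc_self ht)).hasDerivWithinAt)
    (fun _ _ => trivial)
    hinit
  exact fun t ht => this ht
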